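/- Let V be a real inner product space, let A, B ∈ V be nonzero, and let ε ≥ 0. If L_attn(A,B) ≤ ε, then, setting λ = ‖A‖/‖B‖ (which is positive), one has ‖A − λ • B‖ ≤ ‖A‖ · √(2ε). In other words, a small attention distillation loss forces A to be close to a positive scalar multiple of B, with error controlled by √(2ε). -/

import Mathlib

/-- The attention distillation loss `L_attn(A,B) = 1 - ⟨A,B⟩/(‖A‖·‖B‖)`
(Eq. (13) of the paper). -/
noncomputable def Lattn {V : Type*} [NormedAddCommGroup V] [InnerProductSpace ℝ V]
    (A B : V) : ℝ :=
  1 - (inner ℝ A B : ℝ) / (‖A‖ * ‖B‖)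

/-- A small attention distillation loss forces `A` to be close to the positive
scalar multiple `(‖A‖/‖B‖) • B` of `B`, with error controlled by `√(2ε)`. -/
theorem norm_sub_smul_le_of_Lattn_le
    {V : Type*} [NormedAddCommGroup V] [InnerProductSpace ℝ V]
    (A B : V) (hA : A ≠ 0) (hB : B ≠ 0) (ε : ℝ) (hε : 0 ≤ ε)
    (h : Lattn A B ≤ ε) :
    0 < ‖A‖ / ‖B‖ ∧ ‖A - (‖A‖ / ‖B‖) • B‖ ≤ ‖A‖ * Real.sqrt (2 * ε) := by
  have hAn : (0:ℝ) < ‖A‖ := norm_pos_iff.mpr hA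
  have hBn : (0:ℝ) < ‖B‖ := norm_pos_iff.mpr hB
  refine ⟨div_pos hAn hBn, ?_⟩
  set l : ℝ := ‖A‖ / ‖B‖
  have key : ‖A - l • B‖ ^ 2 = 2 * ‖A‖ ^ 2 * Lattn A B := by
    have h1 : ‖A - l • B‖ ^ 2
        = ‖A‖ ^ 2 - 2 * (l * (inner ℝ A B : ℝ)) + l ^ 2 * ‖B‖ ^ 2 := by
      rw [@norm_sub_sq_real, real_inner_smul_right, norm_smul]
      have : |l| = l := abs_of_pos (div_pos hAn hBn)
      rw [Real.norm_eq_abs, this]; ring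
    have hl2 : l ^ 2 * ‖B‖ ^ 2 = ‖A‖ ^ 2 := by
      simp only [l]; field_simp
    rw [h1, hl2, Lattn]
    have : l * (inner ℝ A B : ℝ) = ‖A‖ ^ 2 * ((inner ℝ A B : ℝ) / (‖A‖ * ‖B‖)) := by
      field_simp [l]; simp only [l]; field_simp
    rw [this]; ring
  have hle : ‖A - l • B‖ ^ 2 ≤ (‖A‖ * Real.sqrt (2 * ε)) ^ 2 := by
    rw [key, mul_pow, Real.sq_sqrt (by positivity)]
    have : 2 * ‖A‖ ^ 2 * Lattn A B ≤ 2 * ‖A‖ ^ 2 * ε :=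
      mul_le_mul_of_nonneg_left h (by positivity)
    linarith
  have hr : 0 ≤ ‖A‖ * Real.sqrt (2 * ε) := by positivity
  nlinarith [norm_nonneg (A - l • B)]
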